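/- Let n ≥ 1 be an integer and let G be a graph on 3n + 4 vertices that contains no copy of K_{2,n}. Let v be a vertex whose degree in the complement G̅ equals the maximum degree Δ(G̅), and suppose Δ(G̅) = (3/2)(n + 1) + t for some integer t with 0 ≤ t ≤ 3. If the subgraph H̅ of G̅ induced on N_{G̅}(v) is bipartite with bipartition A ⊔ B where |A| ≥ |B|, then |A| ≤ (3/4)(n + 1) + 4. -/

import Mathlib

open SimpleGraph

/-- `ContainsCopy Γ H` : `Γ` contains a copy of `H`, i.e. `H` is isomorphic to a subgraph
of `Γ`; equivalently, there is an injective graph homomorphism from `H` to `Γ`. -/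
def ContainsCopy {α β : Type*} (Γ : SimpleGraph α) (H : SimpleGraph β) : Prop :=
  ∃ f : H →g Γ, Function.Injective f

/-- The wheel graph `W_m` on `m+1` vertices: the join of a single hub vertex (`none`)
with the cycle `C_m` (on the vertices `some i`). -/
def wheelGraph (m : ℕ) : SimpleGraph (Option (Fin m)) :=
  SimpleGraph.fromRel (fun x y =>
    x = none ∨ ∃ i j : Fin m, x = some i ∧ y = some j ∧ (SimpleGraph.cycleGraph m).Adj i j)

/-- In a `K_{2,n}`-free graph two distinct vertices have fewer than `n` common neighbours. -/
lemma common_nbrs_lt {m n : ℕ} (G : SimpleGraph (Fin m)) [DecidableRel G.Adj]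
    (hG : ¬ ContainsCopy G (completeBipartiteGraph (Fin 2) (Fin n)))
    {x y : Fin m} (hxy : x ≠ y) :
    (G.neighborFinset x ∩ G.neighborFinset y).card < n := by
  by_contra h
  push_neg at h
  obtain ⟨s, hs, hcard⟩ := Finset.exists_subset_card_eq h
  apply hG
  have hmem : ∀ j : Fin n, s.orderEmbOfFin hcard j ∈
      G.neighborFinset x ∩ G.neighborFinset y :=
    fun j => hs (Finset.orderEmbOfFin_mem s hcard j)
  have hax : ∀ j : Fin n, G.Adj x (s.orderEmbOfFin hcard j) := by
    intro j
    have := Finset.mem_inter.mp (hmem j)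
    exact (SimpleGraph.mem_neighborFinset _ _ _).mp this.1
  have hay : ∀ j : Fin n, G.Adj y (s.orderEmbOfFin hcard j) := by
    intro j
    have := Finset.mem_inter.mp (hmem j)
    exact (SimpleGraph.mem_neighborFinset _ _ _).mp this.2
  set F : Fin 2 ⊕ Fin n → Fin m :=
    Sum.elim (fun i => if i = 0 then x else y) (fun j => s.orderEmbOfFin hcard j) with hF
  have hhom : ∀ {a b}, (completeBipartiteGraph (Fin 2) (Fin n)).Adj a b → G.Adj (F a) (F b) := by
    rintro (i | j) (i' | j') hadj <;>
      simp only [completeBipartiteGraph_adj, Sum.isLeft_inl, Sum.isRight_inl,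
        Sum.isLeft_inr, Sum.isRight_inr, and_true, true_and, and_false, false_and,
        or_false, false_or] at hadj
    · exact absurd hadj (by simp)
    · simp only [hF, Sum.elim_inl, Sum.elim_inr]
      split_ifs
      · exact hax j'
      · exact hay j'
    · simp only [hF, Sum.elim_inl, Sum.elim_inr]
      split_ifs
      · exact (hax j).symm
      · exact (hay j).symm
    · exact absurd hadj (by simp)
  have hinj : Function.Injective F := by
    have h2 : ∀ i : Fin 2, i = 0 ∨ i = 1 := by decide
    rintro (i | j) (i' | j') hab <;>
      simp only [hF, Sum.elim_inl, Sum.elim_inr] at hab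
    · rcases h2 i with rfl | rfl <;> rcases h2 i' with rfl | rfl <;> simp_all
    · exfalso
      split_ifs at hab
      · exact (hax j').ne hab
      · exact (hay j').ne hab
    · exfalso
      split_ifs at hab
      · exact (hax j).ne hab.symm
      · exact (hay j).ne hab.symm
    · have := (s.orderEmbOfFin hcard).injective hab
      rw [this]
  exact ⟨⟨F, hhom⟩, hinj⟩

set_option maxHeartbeats 1000000 in
theorem statement9 (n : ℕ) (hn : 1 ≤ n) (t : ℕ) (ht : t ≤ 3)
    (G : SimpleGraph (Fin (3 * n + 4))) [DecidableRel G.Adj]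
    (hG : ¬ ContainsCopy G (completeBipartiteGraph (Fin 2) (Fin n)))
    (v : Fin (3 * n + 4)) (hv : ∀ w, Gᶜ.degree w ≤ Gᶜ.degree v)
    (hdeg : (Gᶜ.degree v : ℝ) = (3 / 2 : ℝ) * (n + 1) + t)
    (A B : Finset (Fin (3 * n + 4)))
    (hdisj : Disjoint A B) (hcover : A ∪ B = Gᶜ.neighborFinset v)
    (hAind : ∀ x ∈ A, ∀ y ∈ A, ¬ Gᶜ.Adj x y)
    (hBind : ∀ x ∈ B, ∀ y ∈ B, ¬ Gᶜ.Adj x y)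
    (hsize : B.card ≤ A.card) :
    (A.card : ℝ) ≤ (3 / 4 : ℝ) * (n + 1) + 4 := by
  classical
  by_contra hcon
  push_neg at hcon
  -- numeric form of the contradiction hypothesis
  have h5 : 3 * n + 20 ≤ 4 * A.card := by
    have h1 : ((3 * n + 19 : ℕ) : ℝ) < ((4 * A.card : ℕ) : ℝ) := by
      push_cast
      nlinarith [hcon]
    have := Nat.cast_lt (α := ℝ) |>.mp h1
    omega
  -- degree of v as a natural number identity
  have hD : 2 * Gᶜ.degree v = 3 * n + 3 + 2 * t := by
    have h1 : ((2 * Gᶜ.degree v : ℕ) : ℝ) = ((3 * n + 3 + 2 * t : ℕ) : ℝ) := by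
      push_cast
      nlinarith [hdeg]
    exact_mod_cast h1
  have hA2 : 2 ≤ A.card := by omega
  -- A is a clique in G
  have hclq : ∀ x ∈ A, ∀ y ∈ A, x ≠ y → G.Adj x y := by
    intro x hx y hy hne
    by_contra hadj
    exact hAind x hx y hy ((G.compl_adj x y).mpr ⟨hne, hadj⟩)
  -- v is not adjacent (in G) to any vertex of A
  have hvnA : ∀ x ∈ A, Gᶜ.Adj v x := by
    intro x hx
    have : x ∈ Gᶜ.neighborFinset v := hcover ▸ Finset.mem_union_left B hx
    exact (SimpleGraph.mem_neighborFinset _ _ _).mp this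
  have hvA : v ∉ A := fun h => (Gᶜ.irrefl) (hvnA v h)
  have hvadj : ∀ x ∈ A, ¬ G.Adj v x := by
    intro x hx
    exact ((G.compl_adj v x).mp (hvnA x hx)).2
  -- common neighbourhood bound
  have hcommon : ∀ {x y : Fin (3 * n + 4)}, x ≠ y →
      (G.neighborFinset x ∩ G.neighborFinset y).card < n :=
    fun hxy => common_nbrs_lt G hG hxy
  -- doubly erased set inside common neighbourhood
  have herase : ∀ x ∈ A, ∀ y ∈ A, x ≠ y →
      (A.erase x).erase y ⊆ G.neighborFinset x ∩ G.neighborFinset y := by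
    intro x hx y hy hne z hz
    have hz1 := Finset.mem_erase.mp hz
    have hz2 := Finset.mem_erase.mp hz1.2
    refine Finset.mem_inter.mpr ⟨?_, ?_⟩
    · exact (SimpleGraph.mem_neighborFinset _ _ _).mpr (hclq x hx z hz2.2 (Ne.symm hz2.1))
    · exact (SimpleGraph.mem_neighborFinset _ _ _).mpr (hclq y hy z hz2.2 (Ne.symm hz1.1))
  have hcard_erase : ∀ x ∈ A, ∀ y ∈ A, x ≠ y →
      ((A.erase x).erase y).card = A.card - 2 := by
    intro x hx y hy hne
    rw [Finset.card_erase_of_mem (Finset.mem_erase.mpr ⟨Ne.symm hne, hy⟩),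
      Finset.card_erase_of_mem hx]
    omega
  -- |A| ≤ n + 1
  obtain ⟨x0, hx0, y0, hy0, hxy0⟩ := Finset.one_lt_card.mp hA2
  have haub : A.card ≤ n + 1 := by
    have h1 := Finset.card_le_card (herase x0 hx0 y0 hy0 hxy0)
    have h2 := hcommon hxy0
    rw [hcard_erase x0 hx0 y0 hy0 hxy0] at h1
    omega
  -- the outside set U
  set U : Finset (Fin (3 * n + 4)) := (insert v A)ᶜ with hUdef
  have hUcard : U.card + (A.card + 1) = 3 * n + 4 := by
    have h1 := Finset.card_add_card_compl (insert v A)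
    rw [← hUdef, Finset.card_insert_of_notMem hvA, Fintype.card_fin] at h1
    omega
  have hUA : ∀ z ∈ U, z ∉ A ∧ z ≠ v := by
    intro z hz
    have := Finset.mem_compl.mp hz
    simp only [Finset.mem_insert, not_or] at this
    exact ⟨this.2, this.1⟩
  -- the counting function
  set f : Fin (3 * n + 4) → ℕ := fun u => ∑ x ∈ A, if G.Adj x u then 1 else 0 with hfdef
  set S : ℕ := ∑ u ∈ U, f u with hSdef
  set Q : ℕ := ∑ u ∈ U, f u ^ 2 with hQdef
  have hfilter : ∀ x : Fin (3 * n + 4),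
      G.neighborFinset x ∩ U = U.filter (fun u => G.Adj x u) := by
    intro x
    ext u
    simp only [Finset.mem_inter, Finset.mem_filter, SimpleGraph.mem_neighborFinset]
    tauto
  have hS : S = ∑ x ∈ A, (G.neighborFinset x ∩ U).card := by
    rw [hSdef, hfdef, Finset.sum_comm]
    refine Finset.sum_congr rfl fun x _ => ?_
    rw [hfilter x, Finset.card_filter]
  -- degree bound
  have hdegb : ∀ x, 3 * n + 3 ≤ G.degree x + Gᶜ.degree v := by
    intro x
    have h1 : Gᶜ.degree x = Fintype.card (Fin (3 * n + 4)) - 1 - G.degree x :=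
      SimpleGraph.degree_compl G x
    have h2 : G.degree x < Fintype.card (Fin (3 * n + 4)) :=
      SimpleGraph.degree_lt_card_verts x
    have h3 := hv x
    rw [Fintype.card_fin] at h1 h2
    omega
  -- per-vertex lower bound on neighbours in U
  have hxlb : ∀ x ∈ A, 3 * n + 4 ≤ A.card + Gᶜ.degree v + (G.neighborFinset x ∩ U).card := by
    intro x hx
    have hsub : G.neighborFinset x ⊆ (A.erase x) ∪ (G.neighborFinset x ∩ U) := by
      intro w hw
      have hadj : G.Adj x w := (SimpleGraph.mem_neighborFinset _ _ _).mp hw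
      by_cases hwA : w ∈ A
      · refine Finset.mem_union_left _ (Finset.mem_erase.mpr ⟨?_, hwA⟩)
        intro hweq
        exact G.irrefl (hweq ▸ hadj)
      · refine Finset.mem_union_right _ (Finset.mem_inter.mpr ⟨hw, ?_⟩)
        refine Finset.mem_compl.mpr ?_
        simp only [Finset.mem_insert, not_or]
        refine ⟨?_, hwA⟩
        intro hweq
        exact hvadj x hx (hweq ▸ hadj).symm
    have h1 := Finset.card_le_card hsub
    have h2 := Finset.card_union_le (A.erase x) (G.neighborFinset x ∩ U)
    have h3 : (A.erase x).card = A.card - 1 := Finset.card_erase_of_mem hx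
    have h4 := hdegb x
    have h5 : G.degree x = (G.neighborFinset x).card := rfl
    omega
  -- summed lower bound
  have hSlb : A.card * (3 * n + 4) ≤ A.card * (A.card + Gᶜ.degree v) + S := by
    rw [hS]
    calc A.card * (3 * n + 4) = ∑ _x ∈ A, (3 * n + 4) := by
          rw [Finset.sum_const, smul_eq_mul]
      _ ≤ ∑ x ∈ A, (A.card + Gᶜ.degree v + (G.neighborFinset x ∩ U).card) :=
          Finset.sum_le_sum fun x hx => hxlb x hx
      _ = A.card * (A.card + Gᶜ.degree v) + ∑ x ∈ A, (G.neighborFinset x ∩ U).card := by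
          rw [Finset.sum_add_distrib, Finset.sum_const, smul_eq_mul]
  -- pair counting for Q
  have hite : ∀ (p q : Prop) [Decidable p] [Decidable q],
      (if p then (1:ℕ) else 0) * (if q then 1 else 0) = if p ∧ q then 1 else 0 := by
    intro p q _ _
    by_cases hp : p <;> by_cases hq : q <;> simp [hp, hq]
  have hQpair : Q = ∑ x ∈ A, ∑ y ∈ A,
      ((G.neighborFinset x ∩ G.neighborFinset y) ∩ U).card := by
    rw [hQdef, hfdef]
    have h1 : ∀ u, (∑ x ∈ A, if G.Adj x u then (1:ℕ) else 0) ^ 2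
        = ∑ x ∈ A, ∑ y ∈ A, if G.Adj x u ∧ G.Adj y u then 1 else 0 := by
      intro u
      rw [sq, Finset.sum_mul_sum]
      exact Finset.sum_congr rfl fun x _ => Finset.sum_congr rfl fun y _ => hite _ _
    simp only [h1]
    rw [Finset.sum_comm]
    refine Finset.sum_congr rfl fun x _ => ?_
    rw [Finset.sum_comm]
    refine Finset.sum_congr rfl fun y _ => ?_
    have h2 : (G.neighborFinset x ∩ G.neighborFinset y) ∩ U
        = U.filter (fun u => G.Adj x u ∧ G.Adj y u) := by
      ext u
      simp only [Finset.mem_inter, Finset.mem_filter, SimpleGraph.mem_neighborFinset]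
      tauto
    rw [h2, Finset.card_filter]
  -- off-diagonal bound
  have hcxy : ∀ x ∈ A, ∀ y ∈ A.erase x,
      ((G.neighborFinset x ∩ G.neighborFinset y) ∩ U).card ≤ n + 1 - A.card := by
    intro x hx y hy
    have hyA := (Finset.mem_erase.mp hy).2
    have hne : x ≠ y := fun h => (Finset.mem_erase.mp hy).1 h.symm
    have hdisj2 : Disjoint ((A.erase x).erase y)
        ((G.neighborFinset x ∩ G.neighborFinset y) ∩ U) := by
      refine Finset.disjoint_left.mpr ?_
      intro z hz1 hz2
      have hz3 := Finset.mem_inter.mp hz2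
      have hz4 := (hUA z hz3.2).1
      exact hz4 (Finset.mem_erase.mp (Finset.mem_erase.mp hz1).2).2
    have hsub2 : ((A.erase x).erase y) ∪ ((G.neighborFinset x ∩ G.neighborFinset y) ∩ U)
        ⊆ G.neighborFinset x ∩ G.neighborFinset y := by
      refine Finset.union_subset (herase x hx y hyA hne) ?_
      exact Finset.inter_subset_left
    have h1 := Finset.card_le_card hsub2
    rw [Finset.card_union_of_disjoint hdisj2, hcard_erase x hx y hyA hne] at h1
    have h2 := hcommon hne
    omega
  -- Q upper bound
  have hQub : Q ≤ S + A.card * ((A.card - 1) * (n + 1 - A.card)) := by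
    rw [hQpair, hS]
    have h1 : ∀ x ∈ A, ∑ y ∈ A, ((G.neighborFinset x ∩ G.neighborFinset y) ∩ U).card
        ≤ (G.neighborFinset x ∩ U).card + (A.card - 1) * (n + 1 - A.card) := by
      intro x hx
      rw [← Finset.add_sum_erase A _ hx]
      have h2 : ((G.neighborFinset x ∩ G.neighborFinset x) ∩ U).card
          = (G.neighborFinset x ∩ U).card := by rw [Finset.inter_self]
      have h3 : ∑ y ∈ A.erase x, ((G.neighborFinset x ∩ G.neighborFinset y) ∩ U).card
          ≤ (A.card - 1) * (n + 1 - A.card) := by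
        calc ∑ y ∈ A.erase x, ((G.neighborFinset x ∩ G.neighborFinset y) ∩ U).card
            ≤ ∑ _y ∈ A.erase x, (n + 1 - A.card) :=
              Finset.sum_le_sum fun y hy => hcxy x hx y hy
          _ = (A.card - 1) * (n + 1 - A.card) := by
              rw [Finset.sum_const, smul_eq_mul, Finset.card_erase_of_mem hx]
      omega
    calc ∑ x ∈ A, ∑ y ∈ A, ((G.neighborFinset x ∩ G.neighborFinset y) ∩ U).card
        ≤ ∑ x ∈ A, ((G.neighborFinset x ∩ U).card + (A.card - 1) * (n + 1 - A.card)) :=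
          Finset.sum_le_sum h1
      _ = (∑ x ∈ A, (G.neighborFinset x ∩ U).card) + A.card * ((A.card - 1) * (n + 1 - A.card)) := by
          rw [Finset.sum_add_distrib, Finset.sum_const, smul_eq_mul]
  -- Cauchy–Schwarz
  have hCS : (S : ℤ) ^ 2 ≤ (U.card : ℤ) * (Q : ℤ) := by
    have h1 : (∑ u ∈ U, ((f u : ℤ))) ^ 2 ≤ (U.card : ℤ) * ∑ u ∈ U, (f u : ℤ) ^ 2 :=
      sq_sum_le_card_mul_sum_sq
    have h2 : (S : ℤ) = ∑ u ∈ U, ((f u : ℤ)) := by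
      rw [hSdef]; push_cast; ring
    have h3 : (Q : ℤ) = ∑ u ∈ U, ((f u : ℤ)) ^ 2 := by
      rw [hQdef]; push_cast; ring
    rw [h2, h3]; exact h1
  -- parity refinement in ℕ : 4|A| ≥ 3n+21
  have h5' : 3 * n + 21 ≤ 4 * A.card := by omega
  -- integer versions of all the facts
  have Z1 : (2 : ℤ) * (Gᶜ.degree v : ℤ) = 3 * (n : ℤ) + 3 + 2 * (t : ℤ) := by
    exact_mod_cast hD
  have Z2 : ((A.card : ℤ)) ≤ (n : ℤ) + 1 := by exact_mod_cast haub
  have Z3 : 3 * (n : ℤ) + 21 ≤ 4 * (A.card : ℤ) := by exact_mod_cast h5'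
  have Z4 : (A.card : ℤ) * (3 * (n : ℤ) + 4)
      ≤ (A.card : ℤ) * ((A.card : ℤ) + (Gᶜ.degree v : ℤ)) + (S : ℤ) := by
    exact_mod_cast hSlb
  have Z5 : (Q : ℤ) ≤ (S : ℤ)
      + (A.card : ℤ) * (((A.card : ℤ) - 1) * ((n : ℤ) + 1 - (A.card : ℤ))) := by
    calc (Q : ℤ) ≤ ((S + A.card * ((A.card - 1) * (n + 1 - A.card)) : ℕ) : ℤ) := by
          exact_mod_cast hQub
      _ = _ := by
          push_cast [Nat.cast_sub (show 1 ≤ A.card by omega),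
            Nat.cast_sub (show A.card ≤ n + 1 by omega)]
          ring
  have Z6 : (U.card : ℤ) = 3 * (n : ℤ) + 3 - (A.card : ℤ) := by
    have h1 := hUcard
    have h2 : ((U.card + (A.card + 1) : ℕ) : ℤ) = ((3 * n + 4 : ℕ) : ℤ) := by
      exact_mod_cast h1
    push_cast at h2
    linarith
  have Z7 : (2 : ℤ) ≤ (A.card : ℤ) := by exact_mod_cast hA2
  have Z8 : (0 : ℤ) ≤ (S : ℤ) := by positivity
  have ZT : (t : ℤ) ≤ 3 := by exact_mod_cast ht
  have ZT0 : (0 : ℤ) ≤ (t : ℤ) := by positivity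
  rw [Z6] at hCS
  -- shorthand casts
  have hu0 : (0 : ℤ) ≤ 4 * (A.card : ℤ) - 3 * (n : ℤ) - 21 := by linarith
  have hm0 : (0 : ℤ) ≤ (n : ℤ) + 1 - (A.card : ℤ) := by linarith
  -- step 1 : σ ≤ 2S
  have step1 : (A.card : ℤ) * (3 * (n : ℤ) - 1 - 2 * (A.card : ℤ)) ≤ 2 * (S : ℤ) := by
    have e1 : (0 : ℤ) ≤ (A.card : ℤ) * (3 * (n : ℤ) + 9 - 2 * (Gᶜ.degree v : ℤ)) :=
      mul_nonneg (by linarith) (by linarith)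
    linarith [Z4, e1]
  -- step 2 : 2M ≤ σ  (certificate 1)
  have step2 : 2 * (3 * (n : ℤ) + 3 - (A.card : ℤ))
      ≤ (A.card : ℤ) * (3 * (n : ℤ) - 1 - 2 * (A.card : ℤ)) := by
    have c1 : (0 : ℤ) ≤ (4 * (A.card : ℤ) - 3 * (n : ℤ) - 21) * ((n : ℤ) + 1 - (A.card : ℤ)) :=
      mul_nonneg hu0 hm0
    have c2 := sq_nonneg (4 * (A.card : ℤ) - 3 * (n : ℤ) - 21)
    have c3 := sq_nonneg ((n : ℤ) + 1 - (A.card : ℤ))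
    linarith [c1, c2, c3, hu0, hm0]
  -- step 3 : monotonicity
  have step3 : ((A.card : ℤ) * (3 * (n : ℤ) - 1 - 2 * (A.card : ℤ))) ^ 2
        - 2 * (3 * (n : ℤ) + 3 - (A.card : ℤ))
          * ((A.card : ℤ) * (3 * (n : ℤ) - 1 - 2 * (A.card : ℤ)))
      ≤ 4 * (S : ℤ) ^ 2 - 4 * (3 * (n : ℤ) + 3 - (A.card : ℤ)) * (S : ℤ) := by
    have hp : (0 : ℤ) ≤ (2 * (S : ℤ) - (A.card : ℤ) * (3 * (n : ℤ) - 1 - 2 * (A.card : ℤ)))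
        * (2 * (S : ℤ) + (A.card : ℤ) * (3 * (n : ℤ) - 1 - 2 * (A.card : ℤ))
          - 2 * (3 * (n : ℤ) + 3 - (A.card : ℤ))) :=
      mul_nonneg (by linarith) (by linarith)
    linarith [hp]
  -- step 4 : main certificate
  have step4 : 4 * (3 * (n : ℤ) + 3 - (A.card : ℤ))
        * ((A.card : ℤ) * (((A.card : ℤ) - 1) * ((n : ℤ) + 1 - (A.card : ℤ))))
      < ((A.card : ℤ) * (3 * (n : ℤ) - 1 - 2 * (A.card : ℤ))) ^ 2
        - 2 * (3 * (n : ℤ) + 3 - (A.card : ℤ))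
          * ((A.card : ℤ) * (3 * (n : ℤ) - 1 - 2 * (A.card : ℤ))) := by
    have c1 := sq_nonneg ((n : ℤ) + 1 - (A.card : ℤ))
    have c2 : (0 : ℤ) ≤ (4 * (A.card : ℤ) - 3 * (n : ℤ) - 21) * ((n : ℤ) + 1 - (A.card : ℤ)) :=
      mul_nonneg hu0 hm0
    have c3 : (0 : ℤ) ≤ (4 * (A.card : ℤ) - 3 * (n : ℤ) - 21)
        * ((n : ℤ) + 1 - (A.card : ℤ)) ^ 2 := mul_nonneg hu0 (sq_nonneg _)
    have c4 : (0 : ℤ) ≤ (4 * (A.card : ℤ) - 3 * (n : ℤ) - 21)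
        * ((n : ℤ) + 1 - (A.card : ℤ)) ^ 3 := mul_nonneg hu0 (pow_nonneg hm0 3)
    have c5 := sq_nonneg (4 * (A.card : ℤ) - 3 * (n : ℤ) - 21)
    have c6 : (0 : ℤ) ≤ (4 * (A.card : ℤ) - 3 * (n : ℤ) - 21) ^ 2
        * ((n : ℤ) + 1 - (A.card : ℤ)) := mul_nonneg (sq_nonneg _) hm0
    have c7 : (0 : ℤ) ≤ (4 * (A.card : ℤ) - 3 * (n : ℤ) - 21) ^ 2
        * ((n : ℤ) + 1 - (A.card : ℤ)) ^ 2 := mul_nonneg (sq_nonneg _) (sq_nonneg _)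
    have c8 : (0 : ℤ) ≤ (4 * (A.card : ℤ) - 3 * (n : ℤ) - 21) ^ 3 := pow_nonneg hu0 3
    have c9 : (0 : ℤ) ≤ (4 * (A.card : ℤ) - 3 * (n : ℤ) - 21) ^ 3
        * ((n : ℤ) + 1 - (A.card : ℤ)) := mul_nonneg (pow_nonneg hu0 3) hm0
    have c10 : (0 : ℤ) ≤ (4 * (A.card : ℤ) - 3 * (n : ℤ) - 21) ^ 4 := pow_nonneg hu0 4
    linarith [c1, c2, c3, c4, c5, c6, c7, c8, c9, c10, hu0, hm0]
  -- assemble the contradiction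
  have hMnn : (0 : ℤ) ≤ 3 * (n : ℤ) + 3 - (A.card : ℤ) := by linarith
  have h6 := mul_le_mul_of_nonneg_left Z5
    (show (0 : ℤ) ≤ 4 * (3 * (n : ℤ) + 3 - (A.card : ℤ)) by linarith)
  linarith [hCS, h6, step1, step2, step3, step4, hMnn]
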